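/- For z ∈ ℝⁿ, the softmax Jacobian J(z) = diag(s) − s sᵀ (with s = softmax(z)) is symmetric positive semidefinite with operator norm at most 1/2, and hence the softmax map is Lipschitz with constant 1/2 in the Euclidean norm. -/

import Mathlib

/-- Softmax of a vector. -/
noncomputable def softmaxVec {n : ℕ} (z : Fin n → ℝ) : Fin n → ℝ :=
  fun i => Real.exp (z i) / ∑ k, Real.exp (z k)

open Matrix

lemma quadKey {n : ℕ} (s x : Fin n → ℝ) (h0 : ∀ i, 0 ≤ s i) (h1 : ∑ i, s i = 1) :
    (∑ i, s i * x i ^ 2) - (∑ i, s i * x i) ^ 2 ≤ (1/2) * ∑ i, x i ^ 2 := by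
  have hid : ∑ i, ∑ j, s i * s j * (x i - x j)^2
      = 2 * ((∑ i, s i * x i ^ 2) - (∑ i, s i * x i) ^ 2) := by
    have e1 : ∀ i : Fin n, ∑ j, s i * s j * (x i - x j)^2
        = s i * x i ^2 * (∑ j, s j) + s i * (∑ j, s j * x j ^2)
          - (s i * x i) * (2 * ∑ j, s j * x j) := by
      intro i
      have e : ∀ j : Fin n, s i * s j * (x i - x j)^2
          = s i * x i ^2 * s j + s i * (s j * x j ^2) - (s i * x i) * (2 * (s j * x j)) :=
        fun j => by ring
      simp only [e, Finset.sum_sub_distrib, Finset.sum_add_distrib, ← Finset.mul_sum]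
    simp only [e1, h1, Finset.sum_sub_distrib, Finset.sum_add_distrib, ← Finset.sum_mul]
    ring
  have hbound : ∑ i, ∑ j, s i * s j * (x i - x j)^2 ≤ ∑ i, x i ^ 2 := by
    have step1 : ∀ i j : Fin n, s i * s j * (x i - x j)^2
        ≤ 2 * (s i * s j) * (x i^2 + x j^2) - (if i = j then 4 * (s i)^2 * (x i)^2 else 0) := by
      intro i j
      by_cases h : i = j
      · subst h; simp; nlinarith [sq_nonneg (s i * x i)]
      · simp only [h, if_false, sub_zero]
        nlinarith [mul_nonneg (h0 i) (h0 j), sq_nonneg (x i + x j)]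
    have e2 : ∀ i : Fin n, ∑ j, (2 * (s i * s j) * (x i^2 + x j^2)
          - (if i = j then 4 * (s i)^2 * (x i)^2 else 0))
        = 2 * s i * x i^2 + s i * (2 * ∑ j, s j * x j ^2) - 4 * (s i)^2 * (x i)^2 := by
      intro i
      have e : ∀ j : Fin n, 2 * (s i * s j) * (x i^2 + x j^2)
          = 2 * s i * x i^2 * s j + s i * (2 * (s j * x j ^2)) := fun j => by ring
      simp only [Finset.sum_sub_distrib, e, Finset.sum_add_distrib, ← Finset.mul_sum,
        Finset.sum_ite_eq, Finset.mem_univ, if_true]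
      rw [h1]; ring
    have e3 : ∑ i, (2 * s i * x i^2 + s i * (2 * ∑ j, s j * x j ^2) - 4 * (s i)^2 * (x i)^2)
        = ∑ i, (4 * (s i * x i ^2) - 4 * ((s i)^2 * (x i)^2)) := by
      simp only [Finset.sum_sub_distrib, Finset.sum_add_distrib, ← Finset.sum_mul,
        ← Finset.mul_sum]
      have e4 : ∑ i, 4 * (s i)^2 * (x i)^2 = (∑ i, (s i)^2 * (x i)^2) * 4 := by
        rw [Finset.sum_mul]; exact Finset.sum_congr rfl fun i _ => by ring
      have e5 : ∑ i, 2 * s i * x i ^2 = 2 * (∑ i, s i * x i ^2) := by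
        rw [Finset.mul_sum]; exact Finset.sum_congr rfl fun i _ => by ring
      rw [h1, e4, e5]; ring
    calc ∑ i, ∑ j, s i * s j * (x i - x j)^2
        ≤ ∑ i, ∑ j, (2 * (s i * s j) * (x i^2 + x j^2)
            - (if i = j then 4 * (s i)^2 * (x i)^2 else 0)) :=
          Finset.sum_le_sum fun i _ => Finset.sum_le_sum fun j _ => step1 i j
      _ = ∑ i, (4 * (s i * x i ^2) - 4 * ((s i)^2 * (x i)^2)) := by
          simp only [e2]; exact e3
      _ ≤ ∑ i, x i ^ 2 := Finset.sum_le_sum fun i _ => by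
          nlinarith [sq_nonneg ((s i - 1/2) * x i)]
  linarith [hid ▸ hbound]
open Matrix



noncomputable def Jm {n : ℕ} (s : Fin n → ℝ) : Matrix (Fin n) (Fin n) ℝ :=
  fun i j => s i * ((if i = j then (1:ℝ) else 0) - s j)

lemma Jm_mulVec {n : ℕ} (s x : Fin n → ℝ) :
    Jm s *ᵥ x = fun i => s i * x i - s i * ∑ j, s j * x j := by
  funext i
  simp only [Jm, Matrix.mulVec, dotProduct]
  have e : ∀ j, s i * ((if i = j then (1:ℝ) else 0) - s j) * x j
      = (if i = j then s i * x j else 0) - s i * (s j * x j) := by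
    intro j; by_cases h : i = j <;> simp [h] <;> ring
  simp only [e, Finset.sum_sub_distrib, Finset.sum_ite_eq, Finset.mem_univ, if_true,
    ← Finset.mul_sum]

lemma Jm_isSymm {n : ℕ} (s : Fin n → ℝ) : (Jm s).IsSymm := by
  ext i j
  simp only [Jm, Matrix.transpose_apply]
  by_cases h : i = j <;> simp [h, eq_comm] <;> ring

lemma Jm_isHermitian {n : ℕ} (s : Fin n → ℝ) : (Jm s).IsHermitian := by
  have := Jm_isSymm s
  rwa [Matrix.IsHermitian, Matrix.conjTranspose_eq_transpose_of_trivial]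

lemma dot_Jm {n : ℕ} (s x : Fin n → ℝ) :
    x ⬝ᵥ (Jm s *ᵥ x) = (∑ i, s i * x i ^ 2) - (∑ i, s i * x i) ^ 2 := by
  rw [Jm_mulVec]
  simp only [dotProduct]
  have e : ∀ i, x i * (s i * x i - s i * ∑ j, s j * x j)
      = s i * x i ^2 - (s i * x i) * (∑ j, s j * x j) := fun i => by ring
  simp only [e, Finset.sum_sub_distrib, ← Finset.sum_mul]
  ring

lemma quadNonneg {n : ℕ} (s x : Fin n → ℝ) (h0 : ∀ i, 0 ≤ s i) (hle : ∑ i, s i ≤ 1) :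
    0 ≤ (∑ i, s i * x i ^ 2) - (∑ i, s i * x i) ^ 2 := by
  have hcs : (∑ i, s i * x i) ^ 2 ≤ (∑ i, s i) * (∑ i, s i * x i ^ 2) := by
    refine Finset.sum_sq_le_sum_mul_sum_of_sq_eq_mul Finset.univ
      (fun i _ => h0 i) (fun i _ => mul_nonneg (h0 i) (sq_nonneg _)) (fun i _ => by ring)
  have hnn : 0 ≤ ∑ i, s i * x i ^ 2 :=
    Finset.sum_nonneg fun i _ => mul_nonneg (h0 i) (sq_nonneg _)
  nlinarith

lemma Jm_posSemidef {n : ℕ} (s : Fin n → ℝ) (h0 : ∀ i, 0 ≤ s i) (hle : ∑ i, s i ≤ 1) :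
    (Jm s).PosSemidef := by
  refine .of_dotProduct_mulVec_nonneg (Jm_isHermitian s) fun x => ?_
  rw [star_trivial, dot_Jm]
  exact quadNonneg s x h0 hle

lemma half_posSemidef {n : ℕ} (s : Fin n → ℝ) (h0 : ∀ i, 0 ≤ s i) (h1 : ∑ i, s i = 1) :
    ((1/2 : ℝ) • (1 : Matrix (Fin n) (Fin n) ℝ) - Jm s).PosSemidef := by
  refine .of_dotProduct_mulVec_nonneg ?_ ?_
  · rw [Matrix.IsHermitian, Matrix.conjTranspose_eq_transpose_of_trivial,
      Matrix.transpose_sub, Matrix.transpose_smul, Matrix.transpose_one, (Jm_isSymm s).eq]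
  · intro x
    rw [star_trivial, Matrix.sub_mulVec, Matrix.smul_mulVec, Matrix.one_mulVec,
      dotProduct_sub, dotProduct_smul, dot_Jm]
    have hx : x ⬝ᵥ x = ∑ i, x i ^ 2 := by
      simp only [dotProduct]; exact Finset.sum_congr rfl fun i _ => by ring
    have := quadKey s x h0 h1
    simp only [smul_eq_mul, hx]
    linarith

lemma Jm_sq_bound {n : ℕ} (s x : Fin n → ℝ) (h0 : ∀ i, 0 ≤ s i) (h1 : ∑ i, s i = 1) :
    ∑ i, ((Jm s *ᵥ x) i) ^ 2 ≤ (1/4) * ∑ i, x i ^ 2 := by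
  have hJ := Jm_posSemidef s h0 h1.le
  have hH := half_posSemidef s h0 h1
  obtain ⟨Q, hQh, hs⟩ : ∃ Q : Matrix (Fin n) (Fin n) ℝ, Qᴴ = Q ∧ Q * Q = Jm s := by
    open scoped MatrixOrder in
    exact ⟨CFC.sqrt (Jm s), (CFC.sqrt_nonneg _).posSemidef.1, CFC.sqrt_mul_sqrt_self _ hJ.nonneg⟩
  have h3 := hH.mul_mul_conjTranspose_same Q
  rw [hQh] at h3
  have hexp : Q * ((1/2 : ℝ) • 1 - Jm s) * Q
      = (1/2 : ℝ) • (Jm s) - Jm s * Jm s := by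
    have e : ∀ Q : Matrix (Fin n) (Fin n) ℝ, Q * Q = Jm s →
        Q * ((1/2 : ℝ) • 1 - Jm s) * Q = (1/2 : ℝ) • (Jm s) - Jm s * Jm s := by
      intro Q h; rw [← h]; noncomm_ring
    exact e Q hs
  rw [hexp] at h3
  have hq := h3.dotProduct_mulVec_nonneg x
  rw [star_trivial, Matrix.sub_mulVec, Matrix.smul_mulVec,
    dotProduct_sub, dotProduct_smul, ← Matrix.mulVec_mulVec] at hq
  -- x ⬝ᵥ (J *ᵥ (J *ᵥ x)) = (J *ᵥ x) ⬝ᵥ (J *ᵥ x)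
  have hsymdot : x ⬝ᵥ (Jm s *ᵥ (Jm s *ᵥ x)) = (Jm s *ᵥ x) ⬝ᵥ (Jm s *ᵥ x) := by
    rw [Matrix.dotProduct_mulVec, ← Matrix.mulVec_transpose, (Jm_isSymm s).eq]
  rw [hsymdot] at hq
  have hdotsq : (Jm s *ᵥ x) ⬝ᵥ (Jm s *ᵥ x) = ∑ i, ((Jm s *ᵥ x) i) ^ 2 := by
    simp only [dotProduct]; exact Finset.sum_congr rfl fun i _ => by ring
  rw [hdotsq] at hq
  have hquad : x ⬝ᵥ (Jm s *ᵥ x) ≤ (1/2) * ∑ i, x i ^ 2 := by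
    rw [dot_Jm]
    have := quadKey s x h0 h1
    have := quadNonneg s x h0 h1.le
    linarith
  simp only [smul_eq_mul] at hq
  linarith

lemma euclid_norm_symm {n : ℕ} (w : Fin n → ℝ) :
    ‖((WithLp.equiv 2 (Fin n → ℝ)).symm w : EuclideanSpace ℝ (Fin n))‖
      = Real.sqrt (∑ i, (w i) ^ 2) := by
  rw [EuclideanSpace.norm_eq]
  congr 1
  exact Finset.sum_congr rfl fun i _ => by
    rw [Real.norm_eq_abs, sq_abs]; rfl

lemma Jm_euclid_bound {n : ℕ} (s : Fin n → ℝ) (h0 : ∀ i, 0 ≤ s i) (h1 : ∑ i, s i = 1)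
    (v : EuclideanSpace ℝ (Fin n)) :
    ‖Matrix.toEuclideanLin (Jm s) v‖ ≤ 1/2 * ‖v‖ := by
  set x : Fin n → ℝ := WithLp.equiv 2 (Fin n → ℝ) v with hx
  have hv : v = (WithLp.equiv 2 (Fin n → ℝ)).symm x := rfl
  rw [Matrix.toEuclideanLin_apply, ← WithLp.equiv_symm_apply, euclid_norm_symm, hv, euclid_norm_symm]
  have hb := Jm_sq_bound s x h0 h1
  calc Real.sqrt (∑ i, ((Jm s *ᵥ x) i) ^ 2)
      ≤ Real.sqrt ((1/4) * ∑ i, x i ^ 2) := Real.sqrt_le_sqrt hb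
    _ = 1/2 * Real.sqrt (∑ i, x i ^ 2) := by
        rw [Real.sqrt_mul (by norm_num : (0:ℝ) ≤ 1/4),
          show (1/4:ℝ) = (1/2)^2 by norm_num, Real.sqrt_sq (by norm_num : (0:ℝ) ≤ 1/2)]

lemma softmax_nonneg {n : ℕ} (z : Fin n → ℝ) (i : Fin n) : 0 ≤ softmaxVec z i :=
  div_nonneg (Real.exp_pos _).le (Finset.sum_nonneg fun k _ => (Real.exp_pos _).le)

lemma softmax_sum {n : ℕ} (hn : n ≠ 0) (z : Fin n → ℝ) : ∑ i, softmaxVec z i = 1 := by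
  have : Nonempty (Fin n) := Fin.pos_iff_nonempty.mp (Nat.pos_of_ne_zero hn)
  have hpos : 0 < ∑ k, Real.exp (z k) :=
    Finset.sum_pos (fun k _ => Real.exp_pos _) Finset.univ_nonempty
  simp only [softmaxVec, ← Finset.sum_div]
  exact div_self hpos.ne'

set_option maxHeartbeats 1000000 in
lemma softmax_hasFDerivAt {n : ℕ} (hn : n ≠ 0) (w : Fin n → ℝ) :
    HasFDerivAt softmaxVec
      (LinearMap.toContinuousLinearMap ((Jm (softmaxVec w)).mulVecLin)) w := by
  have hne : Nonempty (Fin n) := Fin.pos_iff_nonempty.mp (Nat.pos_of_ne_zero hn)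
  have hpos : 0 < ∑ k, Real.exp (w k) :=
    Finset.sum_pos (fun k _ => Real.exp_pos _) Finset.univ_nonempty
  refine hasFDerivAt_pi'.2 fun i => ?_
  have hNi : HasFDerivAt (fun y : Fin n → ℝ => Real.exp (y i))
      (Real.exp (w i) • ContinuousLinearMap.proj i) w := (hasFDerivAt_apply i w).exp
  have hD : HasFDerivAt (fun y : Fin n → ℝ => ∑ k, Real.exp (y k))
      (∑ k, Real.exp (w k) • ContinuousLinearMap.proj k) w :=
    HasFDerivAt.fun_sum fun k _ => (hasFDerivAt_apply k w).exp
  have hinv : HasFDerivAt (fun y : Fin n → ℝ => (∑ k, Real.exp (y k))⁻¹)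
      ((-((∑ k, Real.exp (w k)) ^ 2)⁻¹) • (∑ k, Real.exp (w k) • ContinuousLinearMap.proj k)) w :=
    (hasDerivAt_inv hpos.ne').comp_hasFDerivAt w hD
  have h' := hNi.mul hinv
  have h'' : HasFDerivAt (fun y : Fin n → ℝ => softmaxVec y i)
      (Real.exp (w i) • ((-((∑ k, Real.exp (w k)) ^ 2)⁻¹) •
          (∑ k, Real.exp (w k) • ContinuousLinearMap.proj k)) +
        (∑ k, Real.exp (w k))⁻¹ • (Real.exp (w i) • ContinuousLinearMap.proj i)) w := h'
  refine h''.congr_fderiv ?_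
  symm
  refine ContinuousLinearMap.ext fun v => ?_
  simp only [ContinuousLinearMap.coe_comp', Function.comp_apply,
    LinearMap.coe_toContinuousLinearMap', Matrix.mulVecLin_apply,
    ContinuousLinearMap.proj_apply, ContinuousLinearMap.add_apply,
    ContinuousLinearMap.smul_apply, ContinuousLinearMap.sum_apply, smul_eq_mul]
  show (Jm (softmaxVec w) *ᵥ v) i = _
  rw [Jm_mulVec]
  simp only [softmaxVec]
  rw [show ∑ j, Real.exp (w j) / (∑ k, Real.exp (w k)) * v j
      = (∑ j, Real.exp (w j) * v j) / (∑ k, Real.exp (w k)) from by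
    rw [Finset.sum_div]; exact Finset.sum_congr rfl fun j _ => by rw [div_mul_eq_mul_div]]
  field_simp
  ring

/-- The softmax Jacobian J = diag(s) − s sᵀ is symmetric positive semidefinite with
    operator norm at most 1/2, and softmax is 1/2-Lipschitz in the Euclidean norm. -/
theorem softmax_jacobian_psd_and_lipschitz {n : ℕ} (z : Fin n → ℝ) :
    let s := softmaxVec z
    let J : Matrix (Fin n) (Fin n) ℝ :=
      fun i j => s i * ((if i = j then (1:ℝ) else 0) - s j)
    J.IsSymm ∧ J.PosSemidef ∧
      ‖LinearMap.toContinuousLinearMap (Matrix.toEuclideanLin J)‖ ≤ 1/2 ∧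
      LipschitzWith (1/2) (fun w : EuclideanSpace ℝ (Fin n) =>
        ((WithLp.equiv 2 (Fin n → ℝ)).symm (softmaxVec w) : EuclideanSpace ℝ (Fin n))) := by
  intro s J
  have hJ : J = Jm (softmaxVec z) := rfl
  have h0 := softmax_nonneg z
  refine ⟨hJ ▸ Jm_isSymm _, hJ ▸ Jm_posSemidef _ h0 ?_, ?_, ?_⟩
  · rcases Nat.eq_zero_or_pos n with h | h
    · subst h; simp
    · exact (softmax_sum (Nat.pos_iff_ne_zero.mp h) z).le
  · rcases Nat.eq_zero_or_pos n with h | h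
    · subst h
      refine ContinuousLinearMap.opNorm_le_bound _ (by norm_num) fun v => ?_
      have hss : Subsingleton (EuclideanSpace ℝ (Fin 0)) := by
        exact (WithLp.equiv 2 (Fin 0 → ℝ)).subsingleton
      have hv : v = 0 := Subsingleton.elim v 0
      subst hv
      simp [map_zero]
    · have h1 := softmax_sum (Nat.pos_iff_ne_zero.mp h) z
      refine ContinuousLinearMap.opNorm_le_bound _ (by norm_num) fun v => ?_
      rw [hJ]
      simpa using Jm_euclid_bound (softmaxVec z) h0 h1 v
  · rcases Nat.eq_zero_or_pos n with h | h
    · subst h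
      have hss : Subsingleton (EuclideanSpace ℝ (Fin 0)) := by
        exact (WithLp.equiv 2 (Fin 0 → ℝ)).subsingleton
      intro x y
      rw [Subsingleton.elim x y]
      simp
    · have hn : n ≠ 0 := (Nat.pos_iff_ne_zero.mp h)
      set E : EuclideanSpace ℝ (Fin n) ≃L[ℝ] (Fin n → ℝ) :=
        PiLp.continuousLinearEquiv 2 ℝ (fun _ : Fin n => ℝ) with hE
      have hderiv : ∀ w : EuclideanSpace ℝ (Fin n),
          HasFDerivAt (fun w : EuclideanSpace ℝ (Fin n) =>
            ((WithLp.equiv 2 (Fin n → ℝ)).symm (softmaxVec w) : EuclideanSpace ℝ (Fin n)))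
          ((E.symm : (Fin n → ℝ) →L[ℝ] EuclideanSpace ℝ (Fin n)).comp
            ((LinearMap.toContinuousLinearMap ((Jm (softmaxVec (E w))).mulVecLin)).comp
              (E : EuclideanSpace ℝ (Fin n) →L[ℝ] (Fin n → ℝ)))) w := by
        intro w
        have hgE : HasFDerivAt (softmaxVec ∘ E)
            ((LinearMap.toContinuousLinearMap ((Jm (softmaxVec (E w))).mulVecLin)).comp
              (E : EuclideanSpace ℝ (Fin n) →L[ℝ] (Fin n → ℝ))) w :=
          (softmax_hasFDerivAt hn (E w)).comp w E.hasFDerivAt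
        exact (E.symm.hasFDerivAt).comp w hgE
      have hbound : ∀ w : EuclideanSpace ℝ (Fin n),
          ‖((E.symm : (Fin n → ℝ) →L[ℝ] EuclideanSpace ℝ (Fin n)).comp
            ((LinearMap.toContinuousLinearMap ((Jm (softmaxVec (E w))).mulVecLin)).comp
              (E : EuclideanSpace ℝ (Fin n) →L[ℝ] (Fin n → ℝ))))‖₊ ≤ (1/2 : NNReal) := by
        intro w
        have hhalf : ((1/2 : NNReal) : ℝ) = 1/2 := by norm_num
        rw [← NNReal.coe_le_coe, coe_nnnorm, hhalf]
        refine ContinuousLinearMap.opNorm_le_bound _ (by norm_num) fun v => ?_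
        have hv : ((E.symm : (Fin n → ℝ) →L[ℝ] EuclideanSpace ℝ (Fin n)).comp
            ((LinearMap.toContinuousLinearMap ((Jm (softmaxVec (E w))).mulVecLin)).comp
              (E : EuclideanSpace ℝ (Fin n) →L[ℝ] (Fin n → ℝ)))) v
            = Matrix.toEuclideanLin (Jm (softmaxVec (E w))) v := rfl
        rw [hv]
        exact Jm_euclid_bound _ (softmax_nonneg _) (softmax_sum hn _) v
      have hdiff : Differentiable ℝ (fun w : EuclideanSpace ℝ (Fin n) =>
          ((WithLp.equiv 2 (Fin n → ℝ)).symm (softmaxVec w) : EuclideanSpace ℝ (Fin n))) :=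
        fun w => (hderiv w).differentiableAt
      refine lipschitzWith_of_nnnorm_fderiv_le hdiff fun w => ?_
      rw [(hderiv w).fderiv]
      exact hbound w
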